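/- In the counterexample regime with β₁ > β₂, the AdamW iterate ratio m_t/√v_t is the constant c = ((1−β₁)/(1−λη−β₁)) / √((1−β₂)/((1−λη)²−β₂)), and consequently the iterates x_t of x_t = x_{t−1} − η m_t/√v_t − λη x_{t−1} satisfy x_t − x̃ = (1−λη)^t (x_0 − x̃) where x̃ = −c/λ; in particular x_t converges to x̃. -/

import Mathlib

open Filter

/-- in the counterexample regime with `β₁ > β₂`, the AdamW ratio `m_t/√v_t` is
the constant `c`, the iterates satisfy `x_t - x̃ = (1-λη)^t (x_0 - x̃)` where `x̃ = -c/λ`,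
and `x_t → x̃`. -/
theorem adamw_counterexample (lam η β₁ β₂ : ℝ)
    (hlam : 0 < lam) (hη : 0 < η) (hle : lam * η < 1)
    (hβ₂0 : 0 < β₂) (hβ21 : β₂ < β₁) (hβ₁1 : β₁ < 1 - lam * η)
    (hβ₂' : β₂ < (1 - lam * η) ^ 2)
    (c xt : ℝ)
    (hc : c = ((1 - β₁) / (1 - lam * η - β₁)) /
        Real.sqrt ((1 - β₂) / ((1 - lam * η) ^ 2 - β₂)))
    (hxt : xt = -c / lam)
    (x g m v : ℕ → ℝ) (hx0 : xt < x 0)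
    (hg : ∀ t, 1 ≤ t → g t = x (t - 1) - xt)
    (hm0 : m 0 = (1 - β₁) / (1 - lam * η - β₁) * g 1)
    (hv0 : v 0 = (1 - β₂) / ((1 - lam * η) ^ 2 - β₂) * g 1 ^ 2)
    (hm : ∀ t, 1 ≤ t → m t = β₁ * m (t - 1) + (1 - β₁) * g t)
    (hv : ∀ t, 1 ≤ t → v t = β₂ * v (t - 1) + (1 - β₂) * g t ^ 2)
    (hxrec : ∀ t, 1 ≤ t →
      x t = x (t - 1) - η * (m t / Real.sqrt (v t)) - lam * η * x (t - 1)) :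
    (∀ t, 1 ≤ t → m t / Real.sqrt (v t) = c) ∧
      (∀ t, x t - xt = (1 - lam * η) ^ t * (x 0 - xt)) ∧
      Tendsto x atTop (nhds xt) := by
  set a : ℝ := 1 - lam * η with ha_def
  have ha0 : 0 < a := by simp [ha_def]; linarith
  have ha1 : a < 1 := by
    have : 0 < lam * η := mul_pos hlam hη
    simp [ha_def]; linarith
  have hβ₁0 : 0 < β₁ := lt_trans hβ₂0 hβ21
  have haβ : 0 < a - β₁ := by linarith
  have ha2β : 0 < a ^ 2 - β₂ := by linarith
  have h1β₁ : 0 < 1 - β₁ := by linarith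
  have h1β₂ : 0 < 1 - β₂ := by linarith [lt_trans hβ21 hβ₁1]
  set K1 : ℝ := (1 - β₁) / (a - β₁) with hK1_def
  set K2 : ℝ := (1 - β₂) / (a ^ 2 - β₂) with hK2_def
  have hK1pos : 0 < K1 := div_pos h1β₁ haβ
  have hK2pos : 0 < K2 := div_pos h1β₂ ha2β
  have hsK2 : 0 < Real.sqrt K2 := Real.sqrt_pos.mpr hK2pos
  have hc' : c = K1 / Real.sqrt K2 := by
    exact hc
  have hg1 : g 1 = x 0 - xt := by simpa using hg 1 le_rfl
  have hg1pos : 0 < g 1 := by rw [hg1]; linarith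
  -- square root of v formula
  have hsqrtv : ∀ X : ℝ, Real.sqrt (K2 * X ^ 2 * g 1 ^ 2) =
      Real.sqrt K2 * (|X| * g 1) := by
    intro X
    rw [show K2 * X ^ 2 * g 1 ^ 2 = K2 * (|X| * g 1) ^ 2 by
      rw [mul_pow, sq_abs]; ring, Real.sqrt_mul hK2pos.le,
      Real.sqrt_sq (by positivity)]
  have key : ∀ t, x t - xt = a ^ t * (x 0 - xt) ∧
      m t = K1 * a ^ t * g 1 ∧ v t = K2 * (a ^ t) ^ 2 * g 1 ^ 2 := by
    intro t
    induction t with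
    | zero =>
      refine ⟨by simp, by simpa using hm0, by simpa using hv0⟩
    | succ t ih =>
      obtain ⟨hx, hmt, hvt⟩ := ih
      have hgt : g (t + 1) = a ^ t * (x 0 - xt) := by
        rw [hg (t + 1) (by omega)]; simpa using hx
      have hgt' : g (t + 1) = a ^ t * g 1 := by rw [hgt, hg1]
      have hm' : m (t + 1) = K1 * a ^ (t + 1) * g 1 := by
        rw [hm (t + 1) (by omega)]
        simp only [Nat.add_sub_cancel, hmt, hgt', pow_succ]
        field_simp [hK1_def]
        have h : K1 * (a - β₁) = 1 - β₁ := by rw [hK1_def]; exact div_mul_cancel₀ _ haβ.ne'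
        linear_combination -h
      have hv' : v (t + 1) = K2 * (a ^ (t + 1)) ^ 2 * g 1 ^ 2 := by
        rw [hv (t + 1) (by omega)]
        simp only [Nat.add_sub_cancel, hvt, hgt', pow_succ]
        field_simp [hK2_def]
        have h : K2 * (a ^ 2 - β₂) = 1 - β₂ := by rw [hK2_def]; exact div_mul_cancel₀ _ ha2β.ne'
        linear_combination -h
      have hratio : m (t + 1) / Real.sqrt (v (t + 1)) = c := by
        rw [hm', hv', hsqrtv, abs_of_pos (by positivity),
          mul_assoc K1, mul_div_mul_right _ _ (by positivity), hc']
      have hx' : x (t + 1) = a * x t + (1 - a) * xt := by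
        have := hxrec (t + 1) (by omega)
        simp only [Nat.add_sub_cancel, hratio] at this
        rw [this, hxt, ha_def]
        field_simp
        ring
      refine ⟨?_, hm', hv'⟩
      rw [hx', pow_succ]
      have : a * x t + (1 - a) * xt - xt = a * (x t - xt) := by ring
      rw [this, hx]; ring
  have hratio : ∀ t, m t / Real.sqrt (v t) = c := by
    intro t
    obtain ⟨_, hmt, hvt⟩ := key t
    rw [hmt, hvt, hsqrtv, abs_of_pos (by positivity),
      mul_assoc K1, mul_div_mul_right _ _ (by positivity), hc']
  refine ⟨fun t _ => hratio t, fun t => (key t).1, ?_⟩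
  have hxform : ∀ t, x t = a ^ t * (x 0 - xt) + xt := by
    intro t; have := (key t).1; linarith
  have hlim : Tendsto (fun t : ℕ => a ^ t * (x 0 - xt) + xt) atTop (nhds xt) := by
    have h0 : Tendsto (fun t : ℕ => a ^ t) atTop (nhds 0) :=
      tendsto_pow_atTop_nhds_zero_of_lt_one ha0.le ha1
    have := (h0.mul_const (x 0 - xt)).add_const xt
    simpa using this
  exact hlim.congr (fun t => (hxform t).symm)
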